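/- Mirror descent step inequality: let d be 1-strongly convex w.r.t. ‖·‖_p with Bregman divergence V, let g in R^n, gamma > 0, and let z_+ = argmin_{v} { gamma ⟨g, v - z⟩ + V[z](v) }. Then for every u in R^n, gamma ⟨g, z - u⟩ <= (gamma^2/2)‖g‖_q^2 + V[z](u) - V[z_+](u). -/

import Mathlib

set_option maxHeartbeats 1000000


lemma np_pos {n : ℕ} (Np Nq : EuclideanSpace ℝ (Fin n) → ℝ)
    (hNq_nonneg : ∀ g, 0 ≤ Nq g)
    (hdual : ∀ s x, (inner ℝ s x : ℝ) ≤ Nq s * Np x)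
    (x : EuclideanSpace ℝ (Fin n)) (hx : x ≠ 0) : 0 < Np x := by
  by_contra hc
  push_neg at hc
  have h1 := hdual x x
  have h2 : Nq x * Np x ≤ 0 := mul_nonpos_of_nonneg_of_nonpos (hNq_nonneg x) hc
  have h3 : (0:ℝ) < (inner ℝ x x : ℝ) := by
    rw [real_inner_self_eq_norm_sq]
    have : 0 < ‖x‖ := norm_pos_iff.2 hx
    positivity
  linarith

lemma key_lemma {n : ℕ}
    (d : EuclideanSpace ℝ (Fin n) → ℝ) (Dd : EuclideanSpace ℝ (Fin n) → EuclideanSpace ℝ (Fin n))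
    (hgrad : ∀ x, HasGradientAt d (Dd x) x)
    (Np Nq : EuclideanSpace ℝ (Fin n) → ℝ)
    (hNq_nonneg : ∀ g, 0 ≤ Nq g)
    (hdual : ∀ s x, (inner ℝ s x : ℝ) ≤ Nq s * Np x)
    (hsc : ∀ x y, d y - d x - (inner ℝ (Dd x) (y - x) : ℝ) ≥ 1 / 2 * Np (y - x) ^ 2)
    (g z zp : EuclideanSpace ℝ (Fin n)) (gamma : ℝ) (hgamma : 0 < gamma)
    (hz : Dd z - Dd zp = gamma • g) :
    d z - d zp - (inner ℝ (Dd zp) (z - zp) : ℝ) ≤ gamma ^ 2 / 2 * Nq g ^ 2 := by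
  by_cases hzz : z = zp
  · subst hzz
    simp only [sub_self, inner_zero_right]
    have : 0 ≤ gamma ^ 2 / 2 * Nq g ^ 2 := by positivity
    linarith
  -- setup
  set h : EuclideanSpace ℝ (Fin n) := z - zp with hh_def
  have hh : h ≠ 0 := sub_ne_zero.2 hzz
  have hz' : z = zp + h := by rw [hh_def]; abel
  set T : ℝ := d z - d zp - (inner ℝ (Dd zp) h : ℝ) with hT_def
  have hNph : 0 < Np h := np_pos Np Nq hNq_nonneg hdual h hh
  have hT : 0 < T := by
    have := hsc zp z
    rw [← hh_def] at this
    nlinarith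
  set S : ℝ := (inner ℝ (Dd z) h : ℝ) - (inner ℝ (Dd zp) h : ℝ) with hS_def
  have hSg : S = gamma * (inner ℝ g h : ℝ) := by
    rw [hS_def, ← inner_sub_left, hz, real_inner_smul_left]
  have hS : 0 < S := by
    have h1 := hsc z zp
    have h2 : zp - z = (-1 : ℝ) • h := by rw [hz']; module
    rw [h2, real_inner_smul_right] at h1
    have h3 : (0:ℝ) ≤ 1 / 2 * Np ((-1:ℝ) • h) ^ 2 := by positivity
    have h4 : (0:ℝ) < 1 / 2 * Np h ^ 2 := by positivity
    nlinarith [hsc zp z, h1]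
  set lam : ℝ := S ^ 2 / (4 * T) with hlam_def
  have hlam : 0 < lam := by positivity
  have hlam4 : 4 * T * lam = S ^ 2 := by
    rw [hlam_def]; field_simp
  set C : ℝ → ℝ := fun θ => d z - d (zp + θ • h) - (1 - θ) * (inner ℝ (Dd (zp + θ • h)) h : ℝ)
    with hC_def
  have hzx : ∀ θ : ℝ, z - (zp + θ • h) = (1 - θ) • h := by
    intro θ; rw [hz']; module
  have hCsc : ∀ θ : ℝ, 1 / 2 * Np ((1 - θ) • h) ^ 2 ≤ C θ := by
    intro θ
    have h1 := hsc (zp + θ • h) z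
    rw [hzx θ, real_inner_smul_right] at h1
    simpa [hC_def] using h1
  by_cases hex : ∃ θ : ℝ, 0 ≤ θ ∧ θ < 1 ∧ C θ ≤ lam * (1 - θ) ^ 2
  · obtain ⟨θ, hθ0, hθ1, hC⟩ := hex
    have hθm : (0:ℝ) < 1 - θ := by linarith
    set a : ℝ := Np ((1 - θ) • h) with ha_def
    have ha : 0 < a := np_pos Np Nq hNq_nonneg hdual _ (smul_ne_zero (by linarith) hh)
    have e3 : a ^ 2 ≤ 2 * lam * (1 - θ) ^ 2 := by
      have h1 := hCsc θ; rw [← ha_def] at h1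
      simp only [hC_def] at h1 hC
      linarith
    have e1 : (1 - θ) * S ≤ gamma * (Nq g * a) := by
      have h1 := hdual g ((1 - θ) • h)
      rw [real_inner_smul_right] at h1
      have h2 : gamma * ((1 - θ) * (inner ℝ g h : ℝ)) ≤ gamma * (Nq g * a) :=
        mul_le_mul_of_nonneg_left h1 hgamma.le
      calc (1 - θ) * S = gamma * ((1 - θ) * (inner ℝ g h : ℝ)) := by rw [hSg]; ring
        _ ≤ gamma * (Nq g * a) := h2
    have hlS : 0 < (1 - θ) * S := mul_pos hθm hS
    have e2 : ((1 - θ) * S) ^ 2 ≤ (gamma * (Nq g * a)) ^ 2 := by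
      apply pow_le_pow_left₀ hlS.le e1
    have e4 : 2 * T * ((1 - θ) * S) ^ 2 ≤ gamma ^ 2 * Nq g ^ 2 * ((1 - θ) * S) ^ 2 := by
      calc 2 * T * ((1 - θ) * S) ^ 2 ≤ 2 * T * (gamma * (Nq g * a)) ^ 2 := by
            apply mul_le_mul_of_nonneg_left e2 (by positivity)
        _ = gamma ^ 2 * Nq g ^ 2 * a ^ 2 * (2 * T) := by ring
        _ ≤ gamma ^ 2 * Nq g ^ 2 * (2 * lam * (1 - θ) ^ 2) * (2 * T) := by
            apply mul_le_mul_of_nonneg_right _ (by positivity)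
            apply mul_le_mul_of_nonneg_left e3 (by positivity)
        _ = gamma ^ 2 * Nq g ^ 2 * ((1 - θ) ^ 2 * (4 * T * lam)) := by ring
        _ = gamma ^ 2 * Nq g ^ 2 * ((1 - θ) * S) ^ 2 := by rw [hlam4]; ring
    have e5 : 2 * T ≤ gamma ^ 2 * Nq g ^ 2 :=
      le_of_mul_le_mul_right (by linarith [e4]) (by positivity : (0:ℝ) < ((1 - θ) * S) ^ 2)
    linarith
  · exfalso
    push_neg at hex
    have hTlam : lam < T := by
      have h1 := hex 0 le_rfl one_pos
      simp only [hC_def, zero_smul, add_zero] at h1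
      rw [hT_def]
      calc lam = lam * (1 - (0:ℝ)) ^ 2 := by norm_num
        _ < _ := by linarith [h1]
    set fd : ℝ → ℝ := fun t => (inner ℝ (Dd (zp + t • h)) h : ℝ) - (inner ℝ (Dd zp) h : ℝ)
      with hfd_def
    set f : ℝ → ℝ := fun t => d (zp + t • h) - d zp - t * (inner ℝ (Dd zp) h : ℝ) with hf_def
    have hf' : ∀ t : ℝ, HasDerivAt f (fd t) t := by
      intro t
      have hc : HasDerivAt (fun s : ℝ => zp + s • h) h t := by
        simpa using ((hasDerivAt_id t).smul_const h).const_add zp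
      have h1 : HasDerivAt (fun s : ℝ => d (zp + s • h)) ((inner ℝ (Dd (zp + t • h)) h : ℝ)) t := by
        have := (hgrad (zp + t • h)).hasFDerivAt.comp_hasDerivAt t hc
        exact this
      exact
        (h1.sub_const (d zp)).sub (hasDerivAt_mul_const ((inner ℝ (Dd zp) h : ℝ)))
    have hf0 : f 0 = 0 := by simp [hf_def]
    have hzph : zp + (1:ℝ) • h = z := by rw [one_smul]; exact hz'.symm
    have hf1 : f 1 = T := by
      simp only [hf_def, hzph, hT_def]; ring
    have hCf : ∀ θ : ℝ, C θ = T - f θ - (1 - θ) * fd θ := by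
      intro θ; simp only [hC_def, hf_def, hfd_def, hT_def]; ring
    set q : ℝ → ℝ := fun θ => (T - f θ) * (1 - θ)⁻¹ - lam * θ with hq_def
    have hq' : ∀ θ : ℝ, θ < 1 →
        HasDerivAt q ((C θ - lam * (1 - θ) ^ 2) / (1 - θ) ^ 2) θ := by
      intro θ hθ
      have hu : (1:ℝ) - θ ≠ 0 := sub_ne_zero.2 (by linarith)
      have h1 : HasDerivAt (fun θ : ℝ => T - f θ) (-(fd θ)) θ := (hf' θ).const_sub T
      have h3 : HasDerivAt (fun θ : ℝ => 1 - θ) (-1 : ℝ) θ := by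
        simpa using (hasDerivAt_id θ).const_sub 1
      have h2 := h3.inv hu
      have h4 := (h1.mul h2).sub ((hasDerivAt_id θ).const_mul lam)
      refine h4.congr_deriv ?_
      simp only [hCf θ, Pi.inv_apply]
      field_simp
      ring
    have hqmono : ∀ b : ℝ, 0 < b → b < 1 → q 0 ≤ q b := by
      intro b hb0 hb1
      have hmono := monotoneOn_of_deriv_nonneg (convex_Icc 0 b)
        (fun θ hθ =>
          ((hq' θ (lt_of_le_of_lt hθ.2 hb1)).differentiableAt.continuousAt.continuousWithinAt))
        (by
          rw [interior_Icc]
          exact fun x hx =>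
            ((hq' x (by linarith [hx.2])).differentiableAt.differentiableWithinAt))
        (by
          rw [interior_Icc]
          intro x hx
          rw [(hq' x (by linarith [hx.2])).deriv]
          have hxlt : x < 1 := by linarith [hx.2]
          have h5 := hex x hx.1.le hxlt
          exact div_nonneg (by linarith) (sq_nonneg _))
      exact hmono (Set.left_mem_Icc.2 hb0.le) (Set.right_mem_Icc.2 hb0.le) hb0.le
    have hq0 : q 0 = T := by simp [hq_def, hf0]
    have hqb : ∀ b : ℝ, 0 < b → b < 1 → T + lam * b ≤ S := by
      intro b hb0 hb1
      have h1 := hqmono b hb0 hb1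
      rw [hq0] at h1
      have hub : (0:ℝ) < 1 - b := by linarith
      have h2 : T - f b ≤ (1 - b) * S := by
        have h3 := hsc z (zp + b • h)
        have h4 : (zp + b • h) - z = (b - 1) • h := by rw [hz']; module
        rw [h4, real_inner_smul_right] at h3
        have h5 : (0:ℝ) ≤ 1 / 2 * Np ((b - 1) • h) ^ 2 := by positivity
        simp only [hf_def, hT_def, hS_def]
        nlinarith [h3]
      have h6 : (T - f b) * (1 - b)⁻¹ ≤ S := by
        rw [← div_eq_mul_inv, div_le_iff₀ hub]
        nlinarith [h2]
      have h7 : q b = (T - f b) * (1 - b)⁻¹ - lam * b := by simp [hq_def]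
      rw [h7] at h1
      linarith
    have hfin : T + lam ≤ S := by
      by_contra hco
      push_neg at hco
      set ε : ℝ := T + lam - S with hε_def
      have hε0 : 0 < ε := by linarith
      set b : ℝ := max (1 / 2 : ℝ) (1 - ε / (2 * lam)) with hb_def
      have hb0 : (0:ℝ) < b := lt_of_lt_of_le (by norm_num) (le_max_left _ _)
      have hb1 : b < 1 := by
        apply max_lt (by norm_num)
        have : 0 < ε / (2 * lam) := by positivity
        linarith
      have h1 := hqb b hb0 hb1
      have h2 : lam * (1 - ε / (2 * lam)) ≤ lam * b :=
        mul_le_mul_of_nonneg_left (le_max_right _ _) hlam.le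
      have h3 : lam * (1 - ε / (2 * lam)) = lam - ε / 2 := by
        field_simp
      linarith
    nlinarith [sq_nonneg (2 * T - S), hfin, hTlam, hlam4, hT,
      mul_le_mul_of_nonneg_left hfin (by positivity : (0:ℝ) ≤ 4 * T)]



/-- Mirror descent step inequality. `d` is differentiable with gradient map `Dd` and 1-strongly
convex w.r.t. the norm `Np`, whose dual norm is `Nq`; `V` is the Bregman divergence of `d`;
`zp` is the minimizer of `v ↦ gamma ⟨g, v - z⟩ + V[z](v)`, characterized by its first-order
optimality condition. Then `gamma ⟨g, z - u⟩ ≤ gamma²/2 ‖g‖_q² + V[z](u) - V[z₊](u)`. -/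
theorem mirror_descent_step (n : ℕ)
    (d : EuclideanSpace ℝ (Fin n) → ℝ) (Dd : EuclideanSpace ℝ (Fin n) → EuclideanSpace ℝ (Fin n))
    (hgrad : ∀ x, HasGradientAt d (Dd x) x)
    (Np Nq : EuclideanSpace ℝ (Fin n) → ℝ)
    (hNq_nonneg : ∀ g, 0 ≤ Nq g)
    (hdual : ∀ s x, (inner ℝ s x : ℝ) ≤ Nq s * Np x)
    (hsc : ∀ x y, d y - d x - (inner ℝ (Dd x) (y - x) : ℝ) ≥ 1 / 2 * Np (y - x) ^ 2)
    (V : EuclideanSpace ℝ (Fin n) → EuclideanSpace ℝ (Fin n) → ℝ)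
    (hV : ∀ z x, V z x = d x - d z - (inner ℝ (Dd z) (x - z) : ℝ))
    (g z zp : EuclideanSpace ℝ (Fin n)) (gamma : ℝ) (hgamma : 0 < gamma)
    (hopt : ∀ u, (inner ℝ ((Dd zp - Dd z) + gamma • g) (u - zp) : ℝ) ≥ 0)
    (u : EuclideanSpace ℝ (Fin n)) :
    gamma * (inner ℝ g (z - u) : ℝ) ≤ gamma ^ 2 / 2 * Nq g ^ 2 + V z u - V zp u := by
  -- Step 1: the first-order optimality condition over all of ℝⁿ forces the gradient identity.
  have hw0 : (Dd zp - Dd z) + gamma • g = 0 := by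
    have h1 := hopt (zp - ((Dd zp - Dd z) + gamma • g))
    rw [sub_sub_cancel_left, inner_neg_right] at h1
    exact real_inner_self_nonpos.1 (by linarith)
  have hz : Dd z - Dd zp = gamma • g := by
    have h2 := eq_neg_of_add_eq_zero_right hw0
    rw [neg_sub] at h2
    exact h2.symm
  -- Step 2: apply the key lemma.
  have hkey := key_lemma d Dd hgrad Np Nq hNq_nonneg hdual hsc g z zp gamma hgamma hz
  -- Step 3: algebra.
  rw [hV z u, hV zp u]
  have hgzu : gamma * (inner ℝ g (z - u) : ℝ) = (inner ℝ (Dd z - Dd zp) (z - u) : ℝ) := by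
    rw [hz, real_inner_smul_left]
  rw [hgzu]
  simp only [inner_sub_left, inner_sub_right] at hkey ⊢
  linarith
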